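/- Let m, n, l be positive integers with m² = n² + nl + l², m square-free, and k, l, n pairwise relatively prime, where k = n + l. Then at most one of the integers k, l, n is a perfect square. -/

import Mathlib

lemma nat_sq_of_coprime {a b c : ℕ} (h : Nat.Coprime a b) (heq : a * b = c ^ 2) :
    ∃ r, a = r ^ 2 := by
  apply exists_eq_pow_of_mul_eq_pow (c := c) (k := 2) _ heq
  exact Nat.isUnit_iff.mpr h

lemma odd_of_dvd_odd {a x : ℕ} (hx : Odd x) (h : a ∣ x) : Odd a := by
  rcases Nat.even_or_odd a with he | ho
  · exfalso
    have h2 : (2:ℕ) ∣ x := dvd_trans (even_iff_two_dvd.mp he) h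
    exact Nat.not_even_iff_odd.mpr hx (even_iff_two_dvd.mpr h2)
  · exact ho

lemma four_split {x y g h : ℕ} (hx : 0 < x) (he : x * y = g * h) :
    ∃ a b c d : ℕ, x = a * b ∧ y = c * d ∧ g = a * c ∧ h = b * d := by
  set a := Nat.gcd x g with ha
  obtain ⟨b, hb⟩ : a ∣ x := Nat.gcd_dvd_left _ _
  obtain ⟨c, hc⟩ : a ∣ g := Nat.gcd_dvd_right _ _
  have ha0 : 0 < a := Nat.gcd_pos_of_pos_left _ hx
  have hbc : Nat.Coprime b c := by
    have h1 := Nat.coprime_div_gcd_div_gcd (m := x) (n := g) ha0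
    have e1 : x / a = b := by rw [hb]; exact Nat.mul_div_cancel_left _ ha0
    have e2 : g / a = c := by rw [hc]; exact Nat.mul_div_cancel_left _ ha0
    rwa [← ha, e1, e2] at h1
  have key : b * y = c * h := by
    have h2 : a * (b * y) = a * (c * h) := by
      rw [← mul_assoc, ← mul_assoc, ← hb, ← hc]; exact he
    exact Nat.eq_of_mul_eq_mul_left ha0 h2
  obtain ⟨d, hd⟩ : b ∣ h := Nat.Coprime.dvd_of_dvd_mul_left hbc ⟨y, key.symm⟩
  have hb0 : 0 < b := by
    rcases Nat.eq_zero_or_pos b with h0 | h0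
    · subst h0; simp at hb; omega
    · exact h0
  have hy : y = c * d := by
    have h2 : b * y = b * (c * d) := by rw [key, hd]; ring
    exact Nat.eq_of_mul_eq_mul_left hb0 h2
  exact ⟨a, b, c, d, hb, hy, hc, hd⟩

lemma t_extract {a d M N : ℤ} (had : IsCoprime a d) (ha : a ≠ 0)
    (he : a ^ 2 * M = d ^ 2 * N) : ∃ t, N = a ^ 2 * t ∧ M = d ^ 2 * t := by
  have h2 : IsCoprime (a ^ 2) (d ^ 2) := (had.pow : _)
  obtain ⟨t, ht⟩ : a ^ 2 ∣ N := IsCoprime.dvd_of_dvd_mul_left h2 ⟨M, he.symm⟩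
  refine ⟨t, ht, ?_⟩
  have h2' : a ^ 2 ≠ 0 := pow_ne_zero _ ha
  have h3 : a ^ 2 * M = a ^ 2 * (d ^ 2 * t) := by rw [he, ht]; ring
  exact mul_left_cancel₀ h2' h3

lemma dvd_three {b c T : ℤ} (h : IsCoprime b c) (h1 : T ∣ 3 * b ^ 2)
    (h2 : T ∣ 3 * c ^ 2) : T ∣ 3 := by
  have h3 : IsCoprime (b ^ 2) (c ^ 2) := h.pow
  obtain ⟨U, V, hUV⟩ := h3
  have : 3 = U * (3 * b ^ 2) + V * (3 * c ^ 2) := by linear_combination 3 * hUV.symm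
  rw [this]
  exact Dvd.dvd.add (h1.mul_left U) (h2.mul_left V)

lemma mod3_kill {a d : ℕ} (h : Nat.Coprime a d) (c : ℕ) : a ^ 2 + d ^ 2 ≠ 3 * c := by
  intro he
  have e2 : a ^ 2 % 3 = (a % 3) ^ 2 % 3 := by rw [Nat.pow_mod]
  have e3 : d ^ 2 % 3 = (d % 3) ^ 2 % 3 := by rw [Nat.pow_mod]
  have h3a : a % 3 = 0 ∧ d % 3 = 0 := by
    have ha : a % 3 < 3 := Nat.mod_lt _ (by norm_num)
    have hd : d % 3 < 3 := Nat.mod_lt _ (by norm_num)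
    interval_cases h1 : a % 3 <;> interval_cases h2 : d % 3 <;>
      norm_num at e2 e3 <;> omega
  have h4 : (3:ℕ) ∣ Nat.gcd a d :=
    Nat.dvd_gcd (Nat.dvd_of_mod_eq_zero h3a.1) (Nat.dvd_of_mod_eq_zero h3a.2)
  rw [h] at h4; omega

lemma odd_sq_add_odd_sq_ne {a b : ℕ} (ha : Odd a) (hb : Odd b) (c : ℕ) :
    a ^ 2 + b ^ 2 ≠ 4 * c ^ 2 := by
  obtain ⟨i, hi⟩ := ha; obtain ⟨j, hj⟩ := hb
  have e1 : a ^ 2 = 4 * (i * i + i) + 1 := by rw [hi]; ring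
  have e2 : b ^ 2 = 4 * (j * j + j) + 1 := by rw [hj]; ring
  omega

lemma sumsq_split {N D v : ℕ} (hN : Odd N) (hv : 0 < v) (hcop : Nat.Coprime N v)
    (h : N ^ 2 = D ^ 2 + 4 * v ^ 2) :
    ∃ s t, 0 < s ∧ 0 < t ∧ Nat.Coprime s t ∧ N = s ^ 2 + t ^ 2 ∧ v = s * t ∧
      t ^ 2 = s ^ 2 + D := by
  have hDN : D < N := by nlinarith
  have hDodd : Odd D := by
    rcases Nat.even_or_odd D with he | ho
    · exfalso
      have h1 : Even (D ^ 2 + 4 * v ^ 2) := by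
        rcases he with ⟨d, rfl⟩; exact ⟨2*d^2 + 2*v^2, by ring⟩
      rw [← h] at h1
      exact (Nat.not_even_iff_odd.mpr (hN.pow)) h1
    · exact ho
  obtain ⟨e, he⟩ : ∃ e, N = D + 2 * e := by
    obtain ⟨d, hd⟩ := hDodd; obtain ⟨n, hn⟩ := hN
    refine ⟨n - d, by omega⟩
  have he0 : 0 < e := by nlinarith
  have hev : e * (e + D) = v ^ 2 := by nlinarith
  have hcop2 : Nat.Coprime e (e + D) := by
    by_contra hcc
    obtain ⟨p, hp, hp1, hp2⟩ := Nat.Prime.not_coprime_iff_dvd.mp hcc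
    have hpv : p ∣ v := hp.dvd_of_dvd_pow (n := 2) (by rw [← hev]; exact hp1.mul_right _)
    have hpD : p ∣ D := by
      have h2 := Nat.dvd_sub hp2 hp1
      rwa [Nat.add_sub_cancel_left] at h2
    have hpN : p ∣ N := by rw [he]; exact Nat.dvd_add hpD (hp1.mul_left 2)
    exact hp.one_lt.ne' (Nat.eq_one_of_dvd_coprimes hcop hpN hpv)
  obtain ⟨s, hs⟩ := nat_sq_of_coprime hcop2 hev
  obtain ⟨t, ht⟩ := nat_sq_of_coprime (Nat.Coprime.symm hcop2) (by rw [mul_comm]; exact hev)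
  have hst : v = s * t := by
    have h2 : (s * t) ^ 2 = v ^ 2 := by
      calc (s * t) ^ 2 = s ^ 2 * t ^ 2 := by ring
        _ = e * (e + D) := by rw [← hs, ← ht]
        _ = v ^ 2 := hev
    exact (Nat.pow_left_injective (by norm_num) h2).symm
  have hs0 : 0 < s := by
    rcases Nat.eq_zero_or_pos s with h0 | h0
    · exfalso; rw [h0] at hs; simp at hs; omega
    · exact h0
  have ht0 : 0 < t := by
    rcases Nat.eq_zero_or_pos t with h0 | h0
    · exfalso; rw [h0] at ht; simp at ht; omega
    · exact h0
  have hcopst : Nat.Coprime s t := by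
    by_contra hcc
    obtain ⟨p, hp, hp1, hp2⟩ := Nat.Prime.not_coprime_iff_dvd.mp hcc
    have h1 : p ∣ e := by rw [hs]; exact dvd_pow hp1 two_ne_zero
    have h2 : p ∣ e + D := by rw [ht]; exact dvd_pow hp2 two_ne_zero
    exact hp.one_lt.ne' (Nat.eq_one_of_dvd_coprimes hcop2 h1 h2)
  exact ⟨s, t, hs0, ht0, hcopst, by omega, hst, by omega⟩

lemma sumsq_split_odd {N D v : ℕ} (hvodd : Odd v) (hD : 0 < D) (hcop : Nat.Coprime N v)
    (h : N ^ 2 = D ^ 2 + v ^ 2) :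
    ∃ σ ρ, 0 < ρ ∧ ρ < σ ∧ Nat.Coprime σ ρ ∧ N = σ ^ 2 + ρ ^ 2 ∧ σ ^ 2 = ρ ^ 2 + v ∧
      D = 2 * (σ * ρ) := by
  have hv : 0 < v := hvodd.pos
  have hDN : D < N := by nlinarith
  obtain ⟨f, hf⟩ : ∃ f, N = D + f := ⟨N - D, by omega⟩
  have hf0 : 0 < f := by omega
  have hev : f * (f + 2 * D) = v ^ 2 := by nlinarith
  have hcop2 : Nat.Coprime f (f + 2 * D) := by
    by_contra hcc
    obtain ⟨p, hp, hp1, hp2⟩ := Nat.Prime.not_coprime_iff_dvd.mp hcc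
    have hpv : p ∣ v := hp.dvd_of_dvd_pow (n := 2) (by rw [← hev]; exact hp1.mul_right _)
    have hpodd : p ≠ 2 := by
      rintro rfl
      obtain ⟨j, hj⟩ := hpv
      obtain ⟨i, hi⟩ := hvodd
      omega
    have hp2D : p ∣ 2 * D := by
      have h2 := Nat.dvd_sub hp2 hp1
      rwa [Nat.add_sub_cancel_left] at h2
    have hpD : p ∣ D := by
      rcases (Nat.Prime.dvd_mul hp).mp hp2D with h2 | h2
      · exact absurd ((Nat.prime_dvd_prime_iff_eq hp Nat.prime_two).mp h2) hpodd
      · exact h2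
    have hpN : p ∣ N := by rw [hf]; exact Nat.dvd_add hpD hp1
    exact hp.one_lt.ne' (Nat.eq_one_of_dvd_coprimes hcop hpN hpv)
  obtain ⟨r, hr⟩ := nat_sq_of_coprime hcop2 hev
  obtain ⟨s, hs⟩ := nat_sq_of_coprime (Nat.Coprime.symm hcop2) (by rw [mul_comm]; exact hev)
  have hrs : v = r * s := by
    have h2 : (r * s) ^ 2 = v ^ 2 := by
      calc (r * s) ^ 2 = r ^ 2 * s ^ 2 := by ring
        _ = f * (f + 2 * D) := by rw [← hr, ← hs]
        _ = v ^ 2 := hev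
    exact (Nat.pow_left_injective (by norm_num) h2).symm
  have hr0 : 0 < r := by
    rcases Nat.eq_zero_or_pos r with h0 | h0
    · exfalso; rw [h0] at hr; simp at hr; omega
    · exact h0
  have hrodd : Odd r := by
    rcases Nat.even_or_odd r with heo | ho
    · exfalso; obtain ⟨j, hj⟩ := heo
      have h2 : (2:ℕ) ∣ v := ⟨j * s, by rw [hrs, hj]; ring⟩
      obtain ⟨i, hi⟩ := hvodd; omega
    · exact ho
  have hsodd : Odd s := by
    rcases Nat.even_or_odd s with heo | ho
    · exfalso; obtain ⟨j, hj⟩ := heo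
      have h2 : (2:ℕ) ∣ v := ⟨r * j, by rw [hrs, hj]; ring⟩
      obtain ⟨i, hi⟩ := hvodd; omega
    · exact ho
  have hsr : r < s := by
    have h2 : r ^ 2 < s ^ 2 := by omega
    exact lt_of_pow_lt_pow_left₀ 2 (Nat.zero_le _) h2
  obtain ⟨ρ, hρ⟩ : ∃ ρ, s = r + 2 * ρ := by
    obtain ⟨i, hi⟩ := hrodd; obtain ⟨j, hj⟩ := hsodd
    exact ⟨j - i, by omega⟩
  set σ := r + ρ with hσ
  have hρ0 : 0 < ρ := by omega
  have hρσ : ρ < σ := by omega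
  have hcopσρ : Nat.Coprime σ ρ := by
    by_contra hcc
    obtain ⟨p, hp, hp1, hp2⟩ := Nat.Prime.not_coprime_iff_dvd.mp hcc
    have h1 : p ∣ r := by
      have h2 := Nat.dvd_sub hp1 hp2; rwa [hσ, Nat.add_sub_cancel] at h2
    have h2 : p ∣ s := by rw [hρ]; exact Nat.dvd_add h1 (hp2.mul_left 2)
    have h3 : Nat.Coprime r s := by
      by_contra hcc2
      obtain ⟨q, hq, hq1, hq2⟩ := Nat.Prime.not_coprime_iff_dvd.mp hcc2
      have hqf : q ∣ f := by rw [hr]; exact dvd_pow hq1 two_ne_zero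
      have hqf2 : q ∣ f + 2 * D := by rw [hs]; exact dvd_pow hq2 two_ne_zero
      exact hq.one_lt.ne' (Nat.eq_one_of_dvd_coprimes hcop2 hqf hqf2)
    exact hp.one_lt.ne' (Nat.eq_one_of_dvd_coprimes h3 h1 h2)
  refine ⟨σ, ρ, hρ0, hρσ, hcopσρ, ?_, ?_, ?_⟩
  · have h2 : 2 * N = r ^ 2 + s ^ 2 := by omega
    have h3 : r ^ 2 + s ^ 2 = 2 * (σ ^ 2 + ρ ^ 2) := by rw [hρ, hσ]; ring
    omega
  · have h3 : σ ^ 2 = ρ ^ 2 + r * s := by rw [hρ, hσ]; ring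
    rw [hrs]; exact h3
  · have h2 : s ^ 2 = r ^ 2 + 2 * (2 * (σ * ρ)) := by rw [hρ, hσ]; ring
    omega

lemma coprime_of_sq {p X Y : ℕ} (hp : Nat.Prime p) (hXY : Nat.Coprime X Y)
    (h1 : p ∣ X ^ 2) (h2 : p ∣ Y) : False := by
  have := Nat.eq_one_of_dvd_coprimes hXY (hp.dvd_of_dvd_pow h1) h2
  exact hp.one_lt.ne' this

lemma gamma_hyp {u v P Q : ℕ} (hu : Odd u) (hv : 0 < v) (huv : Nat.Coprime u v)
    (h1 : u ^ 2 = P ^ 2 + v ^ 2) (h2 : u ^ 2 = Q ^ 2 + 4 * v ^ 2) :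
    ∃ s t, 0 < s ∧ 0 < t ∧ Nat.Coprime s t ∧ u = s ^ 2 + t ^ 2 ∧
      s ^ 4 + s ^ 2 * t ^ 2 + t ^ 4 = P ^ 2 := by
  obtain ⟨s, t, hs0, ht0, hst, hu2, hv2, htQ⟩ := sumsq_split hu hv huv h2
  refine ⟨s, t, hs0, ht0, hst, hu2, ?_⟩
  have e1 : (u : ℤ) = (s:ℤ) ^ 2 + (t:ℤ) ^ 2 := by exact_mod_cast hu2
  have e2 : (v : ℤ) = (s:ℤ) * t := by exact_mod_cast hv2
  have e3 : (u : ℤ) ^ 2 = (P:ℤ) ^ 2 + (v:ℤ) ^ 2 := by exact_mod_cast h1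
  have key : (s:ℤ) ^ 4 + (s:ℤ) ^ 2 * (t:ℤ) ^ 2 + (t:ℤ) ^ 4 = (P:ℤ) ^ 2 := by
    linear_combination e3 - ((u:ℤ) + (s:ℤ)^2 + (t:ℤ)^2) * e1 + ((v:ℤ) + (s:ℤ)*t) * e2
  exact_mod_cast key

lemma gamma_leg {X Y Z W : ℕ} (hX : Odd X) (hY : 0 < Y) (hXY : Nat.Coprime X Y)
    (h1 : Z ^ 2 = X ^ 2 + Y ^ 2) (h2 : W ^ 2 = X ^ 2 + 4 * Y ^ 2) :
    ∃ s t, 0 < s ∧ 0 < t ∧ s ≠ t ∧ Nat.Coprime s t ∧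
      s ^ 4 + t ^ 4 = Z ^ 2 + s ^ 2 * t ^ 2 := by
  have hW : Odd W := by
    rcases Nat.even_or_odd W with he | ho
    · exfalso
      obtain ⟨j, hj⟩ := he
      obtain ⟨i, hi⟩ := hX
      have hX2 : X ^ 2 = 4 * (i * i + i) + 1 := by rw [hi]; ring
      have hW2 : W ^ 2 = 4 * (j * j) := by rw [hj]; ring
      omega
    · exact ho
  have hWY : Nat.Coprime W Y := by
    by_contra hcc
    obtain ⟨p, hp, hp1, hp2⟩ := Nat.Prime.not_coprime_iff_dvd.mp hcc
    have hpX2 : p ∣ X ^ 2 := by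
      have d1 : p ∣ W ^ 2 := dvd_pow hp1 two_ne_zero
      have d2 : p ∣ 4 * Y ^ 2 := Dvd.dvd.mul_left (dvd_pow hp2 two_ne_zero) 4
      have d3 := Nat.dvd_sub d1 d2
      rw [h2, Nat.add_sub_cancel] at d3
      exact d3
    exact coprime_of_sq hp hXY hpX2 hp2
  obtain ⟨s, t, hs0, ht0, hst, hW2, hY2, htX⟩ := sumsq_split hW hY hWY h2
  have hstne : s ≠ t := by
    intro he
    subst he
    obtain ⟨i, hi⟩ := hX
    omega
  refine ⟨s, t, hs0, ht0, hstne, hst, ?_⟩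
  have e1 : (t:ℤ) ^ 2 = (s:ℤ) ^ 2 + (X:ℤ) := by exact_mod_cast htX
  have e2 : (Y:ℤ) = (s:ℤ) * t := by exact_mod_cast hY2
  have e3 : (Z:ℤ) ^ 2 = (X:ℤ) ^ 2 + (Y:ℤ) ^ 2 := by exact_mod_cast h1
  have key : (s:ℤ) ^ 4 + (t:ℤ) ^ 4 = (Z:ℤ) ^ 2 + (s:ℤ) ^ 2 * (t:ℤ) ^ 2 := by
    linear_combination (-1 : ℤ) * e3 + ((X:ℤ) + (t:ℤ)^2 - (s:ℤ)^2) * e1 -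
      ((Y:ℤ) + (s:ℤ)*t) * e2
  exact_mod_cast key

lemma L1_aux {z : ℕ}
    (IH : ∀ z', z' < z → ∀ x y : ℕ, 0 < x → 0 < y → Nat.Coprime x y →
      x ^ 4 + x ^ 2 * y ^ 2 + y ^ 4 ≠ z' ^ 2)
    {x y : ℕ} (hx : 0 < x) (hy : 0 < y) (hxo : Odd x) (hye : Even y)
    (hxy : Nat.Coprime x y) (heq : x ^ 4 + x ^ 2 * y ^ 2 + y ^ 4 = z ^ 2) : False := by
  obtain ⟨y₁, hy1⟩ : ∃ y₁, y = 2 * y₁ := by obtain ⟨j, hj⟩ := hye; exact ⟨j, by omega⟩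
  have hy10 : 0 < y₁ := by omega
  have hy1dvd : y₁ ∣ y := ⟨2, by omega⟩
  have hxy1 : Nat.Coprime x y₁ := Nat.Coprime.coprime_dvd_right hy1dvd hxy
  have hyy : y ^ 2 = 4 * y₁ ^ 2 := by rw [hy1]; ring
  have hNz : (x ^ 2 + y ^ 2) ^ 2 = z ^ 2 + 4 * (x * y₁) ^ 2 := by
    have e : (x ^ 2 + y ^ 2) ^ 2 = (x ^ 4 + x ^ 2 * y ^ 2 + y ^ 4) + x ^ 2 * y ^ 2 := by
      ring
    have e2 : x ^ 2 * y ^ 2 = 4 * (x * y₁) ^ 2 := by rw [hy1]; ring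
    omega
  have hNodd : Odd (x ^ 2 + y ^ 2) := by
    obtain ⟨i, hi⟩ := hxo
    exact ⟨2 * i ^ 2 + 2 * i + 2 * y₁ ^ 2, by rw [hi, hy1]; ring⟩
  have hNcop : Nat.Coprime (x ^ 2 + y ^ 2) (x * y₁) := by
    by_contra hcc
    obtain ⟨p, hp, hp1, hp2⟩ := Nat.Prime.not_coprime_iff_dvd.mp hcc
    rcases (Nat.Prime.dvd_mul hp).mp hp2 with hpx | hpy
    · have h1 : p ∣ y ^ 2 := by
        have d := Nat.dvd_sub hp1 (dvd_pow hpx two_ne_zero)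
        rwa [Nat.add_sub_cancel_left] at d
      exact coprime_of_sq hp hxy.symm h1 hpx
    · have hpyy : p ∣ y := hpy.trans hy1dvd
      have h1 : p ∣ x ^ 2 := by
        have d := Nat.dvd_sub hp1 (dvd_pow hpyy two_ne_zero)
        rwa [Nat.add_sub_cancel] at d
      exact coprime_of_sq hp hxy h1 hpyy
  obtain ⟨s, t, hs0, ht0, hstcop, hN2, hst, htz⟩ :=
    sumsq_split hNodd (by positivity) hNcop hNz
  obtain ⟨a, b, c, d, hxab, hycd, hsac, htbd⟩ := four_split hx hst
  obtain ⟨ha0, hb0⟩ : a ≠ 0 ∧ b ≠ 0 := by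
    rw [← Nat.mul_ne_zero_iff, ← hxab]; omega
  obtain ⟨hc0, hd0⟩ : c ≠ 0 ∧ d ≠ 0 := by
    rw [← Nat.mul_ne_zero_iff, ← hycd]; omega
  have hadvd : a ∣ x := ⟨b, hxab⟩
  have hbdvd : b ∣ x := ⟨a, by rw [hxab]; ring⟩
  have hcdvd : c ∣ y₁ := ⟨d, hycd⟩
  have hddvd : d ∣ y₁ := ⟨c, by rw [hycd]; ring⟩
  have hbc : Nat.Coprime b c :=
    Nat.Coprime.coprime_dvd_left hbdvd (Nat.Coprime.coprime_dvd_right hcdvd hxy1)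
  have had2 : Nat.Coprime a d :=
    Nat.Coprime.coprime_dvd_left hadvd (Nat.Coprime.coprime_dvd_right hddvd hxy1)
  have hao : Odd a := odd_of_dvd_odd hxo hadvd
  have hbo : Odd b := odd_of_dvd_odd hxo hbdvd
  have hmain : (a*b)^2 + 4*(c*d)^2 = (a*c)^2 + (b*d)^2 := by
    have e1 : x^2 + 4*y₁^2 = s^2 + t^2 := by omega
    rw [hxab, hycd, hsac, htbd] at e1; exact e1
  have hmZ : ((a:ℤ)*b)^2 + 4*((c:ℤ)*d)^2 = ((a:ℤ)*c)^2 + ((b:ℤ)*d)^2 := by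
    exact_mod_cast hmain
  have he : (a:ℤ)^2 * ((b:ℤ)^2 - (c:ℤ)^2) = (d:ℤ)^2 * ((b:ℤ)^2 - 4*(c:ℤ)^2) := by
    linear_combination hmZ
  have hcopZ : IsCoprime (a:ℤ) (d:ℤ) := by
    rw [Nat.isCoprime_iff_coprime]; exact had2
  have haZ : (a:ℤ) ≠ 0 := Int.natCast_ne_zero.mpr ha0
  obtain ⟨T, hT1, hT2⟩ := t_extract hcopZ haZ he
  have hTd3 : T ∣ 3 := by
    apply dvd_three (b := (b:ℤ)) (c := (c:ℤ))
      (by rw [Nat.isCoprime_iff_coprime]; exact hbc)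
    · exact ⟨4*(d:ℤ)^2 - (a:ℤ)^2, by linear_combination 4*hT2 - hT1⟩
    · exact ⟨(d:ℤ)^2 - (a:ℤ)^2, by linear_combination hT2 - hT1⟩
  have hTcases : T = 1 ∨ T = -1 ∨ T = 3 ∨ T = -3 := by
    have h1 : T.natAbs ∣ 3 := by
      simpa using Int.natAbs_dvd_natAbs.mpr hTd3
    have h2 := (Nat.Prime.eq_one_or_self_of_dvd (by norm_num) _ h1)
    rcases Int.natAbs_eq T with h3 | h3 <;> omega
  have hxx2 : x ≤ x ^ 2 := Nat.le_self_pow two_ne_zero x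
  have hx2z : x ^ 2 < z := by
    have h1 : (x^2)^2 < z^2 := by
      have e : (x^2)^2 = x^4 := by ring
      have pos : 0 < x^2*y^2 := by positivity
      have pos2 : 0 < y^4 := by positivity
      omega
    exact lt_of_pow_lt_pow_left₀ 2 (Nat.zero_le _) h1
  have hc0' : 0 < c := Nat.pos_of_ne_zero hc0
  have hd0' : 0 < d := Nat.pos_of_ne_zero hd0
  rcases hTcases with rfl | rfl | rfl | rfl
  · -- T = 1
    have n1 : b^2 = d^2 + c^2 := by
      exact_mod_cast (show ((b:ℤ)^2 = (d:ℤ)^2 + (c:ℤ)^2) by linear_combination hT2)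
    have n2 : b^2 = a^2 + 4*c^2 := by
      exact_mod_cast (show ((b:ℤ)^2 = (a:ℤ)^2 + 4*(c:ℤ)^2) by linear_combination hT1)
    obtain ⟨s', t', hs'0, ht'0, hst', hb2, hsol⟩ := gamma_hyp hbo hc0' hbc n1 n2
    have hdb : d < b := by
      have h1 : d^2 < b^2 := by
        have : 0 < c^2 := by positivity
        omega
      exact lt_of_pow_lt_pow_left₀ 2 (Nat.zero_le _) h1
    have hblex : b ≤ x := Nat.le_of_dvd hx hbdvd
    exact IH d (by omega) s' t' hs'0 ht'0 hst' hsol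
  · -- T = -1
    have n1 : a^2 + b^2 = 4*c^2 := by
      exact_mod_cast (show ((a:ℤ)^2 + (b:ℤ)^2 = 4*(c:ℤ)^2) by linear_combination hT1)
    exact odd_sq_add_odd_sq_ne hao hbo c n1
  · -- T = 3
    have h3 : (3:ℤ) * ((a:ℤ)^2 + (b:ℤ)^2) = 3 * (4*(d:ℤ)^2) := by
      linear_combination 4*hT2 - hT1
    have n1 : a^2 + b^2 = 4*d^2 := by
      exact_mod_cast mul_left_cancel₀ (by norm_num : (3:ℤ) ≠ 0) h3
    exact odd_sq_add_odd_sq_ne hao hbo d n1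
  · -- T = -3
    have h3 : (3:ℤ) * ((a:ℤ)^2) = 3 * ((c:ℤ)^2 + (d:ℤ)^2) := by
      linear_combination hT1 - hT2
    have n1 : a^2 = c^2 + d^2 := by
      exact_mod_cast mul_left_cancel₀ (by norm_num : (3:ℤ) ≠ 0) h3
    have h4 : (3:ℤ) * ((a:ℤ)^2) = 3 * ((b:ℤ)^2 + 4*(d:ℤ)^2) := by
      linear_combination hT1 - 4*hT2
    have n2 : a^2 = b^2 + 4*d^2 := by
      exact_mod_cast mul_left_cancel₀ (by norm_num : (3:ℤ) ≠ 0) h4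
    obtain ⟨s', t', hs'0, ht'0, hst', ha2, hsol⟩ := gamma_hyp hao hd0' had2 n1 n2
    have hca : c < a := by
      have h1 : c^2 < a^2 := by
        have : 0 < d^2 := by positivity
        omega
      exact lt_of_pow_lt_pow_left₀ 2 (Nat.zero_le _) h1
    have halex : a ≤ x := Nat.le_of_dvd hx hadvd
    exact IH c (by omega) s' t' hs'0 ht'0 hst' hsol

theorem no_E1 : ∀ z x y : ℕ, 0 < x → 0 < y → Nat.Coprime x y →
    x ^ 4 + x ^ 2 * y ^ 2 + y ^ 4 ≠ z ^ 2 := by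
  intro z
  induction z using Nat.strong_induction_on with
  | _ z IH =>
    intro x y hx hy hxy heq
    rcases Nat.even_or_odd x with hxe | hxo
    · rcases Nat.even_or_odd y with hye | hyo
      · -- both even
        have h2 : (2:ℕ) ∣ Nat.gcd x y :=
          Nat.dvd_gcd (even_iff_two_dvd.mp hxe) (even_iff_two_dvd.mp hye)
        rw [hxy] at h2; omega
      · -- x even, y odd : swap
        have heq' : y ^ 4 + y ^ 2 * x ^ 2 + x ^ 4 = z ^ 2 := by
          have e : y ^ 2 * x ^ 2 = x ^ 2 * y ^ 2 := by ring
          omega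
        exact L1_aux IH hy hx hyo hxe hxy.symm heq'
    · rcases Nat.even_or_odd y with hye | hyo
      · exact L1_aux IH hx hy hxo hye hxy heq
      · -- both odd : mod 4
        obtain ⟨i, hi⟩ := hxo
        obtain ⟨j, hj⟩ := hyo
        have e1 : x ^ 4 = 4*(4*i^4+8*i^3+6*i^2+2*i)+1 := by rw [hi]; ring
        have e2 : y ^ 4 = 4*(4*j^4+8*j^3+6*j^2+2*j)+1 := by rw [hj]; ring
        have e3 : x ^ 2 * y ^ 2 =
            4*(4*(i^2+i)*(j^2+j) + (i^2+i)+(j^2+j))+1 := by rw [hi, hj]; ring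
        rcases Nat.even_or_odd z with hze | hzo
        · obtain ⟨m, hm⟩ := hze
          have e4 : z ^ 2 = 4 * (m * m) := by rw [hm]; ring
          omega
        · obtain ⟨m, hm⟩ := hzo
          have e4 : z ^ 2 = 4 * (m * m + m) + 1 := by rw [hm]; ring
          omega

lemma L2_main {z : ℕ}
    (IH : ∀ z', z' < z → ∀ x y : ℕ, 0 < x → 0 < y → x ≠ y → Nat.Coprime x y →
      x ^ 4 + y ^ 4 ≠ z' ^ 2 + x ^ 2 * y ^ 2)
    {x y : ℕ} (hy : 0 < y) (hgt : y < x) (hxy : Nat.Coprime x y)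
    (heq : x ^ 4 + y ^ 4 = z ^ 2 + x ^ 2 * y ^ 2) : False := by
  have hx : 0 < x := lt_trans hy hgt
  obtain ⟨D, hD0, hD⟩ : ∃ D, 0 < D ∧ x ^ 2 = y ^ 2 + D := by
    have h1 : y ^ 2 < x ^ 2 := Nat.pow_lt_pow_left hgt two_ne_zero
    exact ⟨x ^ 2 - y ^ 2, by omega, by omega⟩
  have heqZ : (x:ℤ)^4 + (y:ℤ)^4 = (z:ℤ)^2 + (x:ℤ)^2*(y:ℤ)^2 := by exact_mod_cast heq
  have hDZ : (x:ℤ)^2 = (y:ℤ)^2 + (D:ℤ) := by exact_mod_cast hD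
  have hzD : z ^ 2 = D ^ 2 + (x*y) ^ 2 := by
    have key : (z:ℤ)^2 = (D:ℤ)^2 + ((x:ℤ)*(y:ℤ))^2 := by
      linear_combination (-1 : ℤ)*heqZ + ((x:ℤ)^2 - (y:ℤ)^2 + (D:ℤ))*hDZ
    exact_mod_cast key
  have hzxy : Nat.Coprime z (x*y) := by
    by_contra hcc
    obtain ⟨p, hp, hp1, hp2⟩ := Nat.Prime.not_coprime_iff_dvd.mp hcc
    rcases (Nat.Prime.dvd_mul hp).mp hp2 with hpx | hpy
    · have d1 : p ∣ z^2 + x^2*y^2 :=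
        dvd_add (dvd_pow hp1 two_ne_zero) ((dvd_pow hpx two_ne_zero).mul_right _)
      rw [← heq] at d1
      have d3 := Nat.dvd_sub d1 (dvd_pow hpx (by norm_num : (4:ℕ) ≠ 0))
      rw [Nat.add_sub_cancel_left] at d3
      have : p ∣ y := hp.dvd_of_dvd_pow d3
      exact coprime_of_sq hp hxy (dvd_pow hpx two_ne_zero) this
    · have d1 : p ∣ z^2 + x^2*y^2 :=
        dvd_add (dvd_pow hp1 two_ne_zero) ((dvd_pow hpy two_ne_zero).mul_left _)
      rw [← heq] at d1
      have d2 : p ∣ x^4 + y^4 - y^4 := Nat.dvd_sub d1 (dvd_pow hpy (by norm_num : (4:ℕ) ≠ 0))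
      rw [Nat.add_sub_cancel] at d2
      have : p ∣ x := hp.dvd_of_dvd_pow d2
      exact coprime_of_sq hp hxy.symm (dvd_pow hpy two_ne_zero) this
  have hzxy2 : z ≥ x * y := by
    have h1 : (x*y)^2 ≤ z^2 := by omega
    exact le_of_pow_le_pow_left₀ two_ne_zero (Nat.zero_le _) h1
  rcases Nat.even_or_odd x with hxe | hxo
  · rcases Nat.even_or_odd y with hye | hyo
    · -- both even: impossible
      have h2 : (2:ℕ) ∣ Nat.gcd x y :=
        Nat.dvd_gcd (even_iff_two_dvd.mp hxe) (even_iff_two_dvd.mp hye)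
      rw [hxy] at h2; omega
    · -- B2: x even, y odd
      obtain ⟨x₁, hx1⟩ : ∃ x₁, x = 2 * x₁ := by obtain ⟨j, hj⟩ := hxe; exact ⟨j, by omega⟩
      have hx10 : 0 < x₁ := by omega
      have hx1dvd : x₁ ∣ x := ⟨2, by omega⟩
      have hyx1 : Nat.Coprime y x₁ := Nat.Coprime.coprime_dvd_right hx1dvd hxy.symm
      have hxx : x ^ 2 = 4 * x₁ ^ 2 := by rw [hx1]; ring
      have hDodd : Odd D := by
        obtain ⟨i, hi⟩ := hyo
        have e1 : y ^ 2 = 4*(i*i+i)+1 := by rw [hi]; ring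
        rcases Nat.even_or_odd D with ⟨j, hj⟩ | h
        · omega
        · exact h
      have hY : x * y = 2 * (x₁ * y) := by rw [hx1]; ring
      have hzD2 : z ^ 2 = D ^ 2 + 4 * (x₁*y) ^ 2 := by
        have e : (x*y)^2 = 4*(x₁*y)^2 := by rw [hx1]; ring
        omega
      have hzodd : Odd z := by
        rcases Nat.even_or_odd z with ⟨m, hm⟩ | h
        · exfalso
          obtain ⟨i, hi⟩ := hDodd
          have e1 : z^2 = 4*(m*m) := by rw [hm]; ring
          have e2 : D^2 = 4*(i*i+i)+1 := by rw [hi]; ring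
          omega
        · exact h
      have hcopzY : Nat.Coprime z (x₁*y) :=
        Nat.Coprime.coprime_dvd_right ⟨2, by omega⟩ hzxy
      obtain ⟨s, t, hs0, ht0, hstcop, hzst, hYst, htD⟩ :=
        sumsq_split hzodd (by positivity) hcopzY hzD2
      have hYst' : y * x₁ = s * t := by rw [← hYst]; ring
      obtain ⟨a, b, c, d, hyab, hxcd, hsac, htbd⟩ := four_split hy hYst'
      obtain ⟨ha0, hb0⟩ : a ≠ 0 ∧ b ≠ 0 := by
        rw [← Nat.mul_ne_zero_iff, ← hyab]; omega
      obtain ⟨hc0, hd0⟩ : c ≠ 0 ∧ d ≠ 0 := by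
        rw [← Nat.mul_ne_zero_iff, ← hxcd]; omega
      have hadvd : a ∣ y := ⟨b, hyab⟩
      have hbdvd : b ∣ y := ⟨a, by rw [hyab]; ring⟩
      have hcdvd : c ∣ x₁ := ⟨d, hxcd⟩
      have hddvd : d ∣ x₁ := ⟨c, by rw [hxcd]; ring⟩
      have hbc : Nat.Coprime b c :=
        Nat.Coprime.coprime_dvd_left hbdvd (Nat.Coprime.coprime_dvd_right hcdvd hyx1)
      have had2 : Nat.Coprime a d :=
        Nat.Coprime.coprime_dvd_left hadvd (Nat.Coprime.coprime_dvd_right hddvd hyx1)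
      have hao : Odd a := odd_of_dvd_odd hyo hadvd
      have hc0' : 0 < c := Nat.pos_of_ne_zero hc0
      have hd0' : 0 < d := Nat.pos_of_ne_zero hd0
      have hmain : 4*(c*d)^2 + (a*c)^2 = (a*b)^2 + (b*d)^2 := by
        have e1 : 4*x₁^2 + s^2 = y^2 + t^2 := by omega
        rw [hyab, hxcd, hsac, htbd] at e1; exact e1
      have hmZ : 4*((c:ℤ)*d)^2 + ((a:ℤ)*c)^2 = ((a:ℤ)*b)^2 + ((b:ℤ)*d)^2 := by
        exact_mod_cast hmain
      have he : (b:ℤ)^2 * ((a:ℤ)^2 + (d:ℤ)^2) = (c:ℤ)^2 * ((a:ℤ)^2 + 4*(d:ℤ)^2) := by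
        linear_combination -hmZ
      have hcopZ : IsCoprime (b:ℤ) (c:ℤ) := by
        rw [Nat.isCoprime_iff_coprime]; exact hbc
      have hbZ : (b:ℤ) ≠ 0 := Int.natCast_ne_zero.mpr hb0
      obtain ⟨T, hT1, hT2⟩ := t_extract hcopZ hbZ he
      -- hT1 : a²+4d² = b²*T , hT2 : a²+d² = c²*T
      have hTpos : 0 < T := by
        by_contra hle
        push_neg at hle
        have h2 : (c:ℤ)^2 * T ≤ 0 := mul_nonpos_of_nonneg_of_nonpos (by positivity) hle
        have h1 : (0:ℤ) < (a:ℤ)^2 + (d:ℤ)^2 := by positivity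
        linarith [hT2]
      have hTd3 : T ∣ 3 := by
        apply dvd_three (b := (a:ℤ)) (c := (d:ℤ))
          (by rw [Nat.isCoprime_iff_coprime]; exact had2)
        · exact ⟨4*(c:ℤ)^2 - (b:ℤ)^2, by linear_combination 4*hT2 - hT1⟩
        · exact ⟨(b:ℤ)^2 - (c:ℤ)^2, by linear_combination hT1 - hT2⟩
      have hTcases : T = 1 ∨ T = 3 := by
        have h1 : T.natAbs ∣ 3 := by
          simpa using Int.natAbs_dvd_natAbs.mpr hTd3
        have h2 := (Nat.Prime.eq_one_or_self_of_dvd (by norm_num) _ h1)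
        rcases Int.natAbs_eq T with h3 | h3 <;> omega
      rcases hTcases with rfl | rfl
      · -- T = 1 : c² = a²+d², b² = a²+4d²
        have n1 : c^2 = a^2 + d^2 := by
          exact_mod_cast (show ((c:ℤ)^2 = (a:ℤ)^2 + (d:ℤ)^2) by linear_combination -hT2)
        have n2 : b^2 = a^2 + 4*d^2 := by
          exact_mod_cast (show ((b:ℤ)^2 = (a:ℤ)^2 + 4*(d:ℤ)^2) by linear_combination -hT1)
        obtain ⟨s', t', hs'0, ht'0, hst'ne, hst'cop, hsol⟩ :=
          gamma_leg hao hd0' had2 n1 n2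
        have hclt : c < z := by
          have h1 : c ≤ x₁ := Nat.le_of_dvd hx10 hcdvd
          have h2 : x ≤ x * y := Nat.le_mul_of_pos_right x hy
          omega
        exact IH c hclt s' t' hs'0 ht'0 hst'ne hst'cop hsol
      · -- T = 3 : a²+d² = 3c² impossible
        have n1 : a^2 + d^2 = 3*c^2 := by
          exact_mod_cast (show ((a:ℤ)^2 + (d:ℤ)^2 = 3*(c:ℤ)^2) by linear_combination hT2)
        exact mod3_kill had2 (c^2) n1
  · rcases Nat.even_or_odd y with hye | hyo
    · -- B1: x odd, y even
      obtain ⟨y₁, hy1⟩ : ∃ y₁, y = 2 * y₁ := by obtain ⟨j, hj⟩ := hye; exact ⟨j, by omega⟩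
      have hy10 : 0 < y₁ := by omega
      have hy1dvd : y₁ ∣ y := ⟨2, by omega⟩
      have hxy1 : Nat.Coprime x y₁ := Nat.Coprime.coprime_dvd_right hy1dvd hxy
      have hyy : y ^ 2 = 4 * y₁ ^ 2 := by rw [hy1]; ring
      have hDodd : Odd D := by
        obtain ⟨i, hi⟩ := hxo
        have e1 : x ^ 2 = 4*(i*i+i)+1 := by rw [hi]; ring
        rcases Nat.even_or_odd D with ⟨j, hj⟩ | h
        · omega
        · exact h
      have hzD2 : z ^ 2 = D ^ 2 + 4 * (x*y₁) ^ 2 := by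
        have e : (x*y)^2 = 4*(x*y₁)^2 := by rw [hy1]; ring
        omega
      have hzodd : Odd z := by
        rcases Nat.even_or_odd z with ⟨m, hm⟩ | h
        · exfalso
          obtain ⟨i, hi⟩ := hDodd
          have e1 : z^2 = 4*(m*m) := by rw [hm]; ring
          have e2 : D^2 = 4*(i*i+i)+1 := by rw [hi]; ring
          omega
        · exact h
      have hcopzY : Nat.Coprime z (x*y₁) :=
        Nat.Coprime.coprime_dvd_right ⟨2, by rw [hy1]; ring⟩ hzxy
      obtain ⟨s, t, hs0, ht0, hstcop, hzst, hYst, htD⟩ :=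
        sumsq_split hzodd (by positivity) hcopzY hzD2
      obtain ⟨a, b, c, d, hxab, hycd, hsac, htbd⟩ := four_split hx hYst
      obtain ⟨ha0, hb0⟩ : a ≠ 0 ∧ b ≠ 0 := by
        rw [← Nat.mul_ne_zero_iff, ← hxab]; omega
      obtain ⟨hc0, hd0⟩ : c ≠ 0 ∧ d ≠ 0 := by
        rw [← Nat.mul_ne_zero_iff, ← hycd]; omega
      have hadvd : a ∣ x := ⟨b, hxab⟩
      have hbdvd : b ∣ x := ⟨a, by rw [hxab]; ring⟩
      have hcdvd : c ∣ y₁ := ⟨d, hycd⟩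
      have hddvd : d ∣ y₁ := ⟨c, by rw [hycd]; ring⟩
      have hbc : Nat.Coprime b c :=
        Nat.Coprime.coprime_dvd_left hbdvd (Nat.Coprime.coprime_dvd_right hcdvd hxy1)
      have had2 : Nat.Coprime a d :=
        Nat.Coprime.coprime_dvd_left hadvd (Nat.Coprime.coprime_dvd_right hddvd hxy1)
      have hbo : Odd b := odd_of_dvd_odd hxo hbdvd
      have hc0' : 0 < c := Nat.pos_of_ne_zero hc0
      have hd0' : 0 < d := Nat.pos_of_ne_zero hd0
      have hmain : (a*b)^2 + (a*c)^2 = 4*(c*d)^2 + (b*d)^2 := by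
        have e1 : x^2 + s^2 = 4*y₁^2 + t^2 := by omega
        rw [hxab, hycd, hsac, htbd] at e1; exact e1
      have hmZ : ((a:ℤ)*b)^2 + ((a:ℤ)*c)^2 = 4*((c:ℤ)*d)^2 + ((b:ℤ)*d)^2 := by
        exact_mod_cast hmain
      have he : (a:ℤ)^2 * ((b:ℤ)^2 + (c:ℤ)^2) = (d:ℤ)^2 * ((b:ℤ)^2 + 4*(c:ℤ)^2) := by
        linear_combination hmZ
      have hcopZ : IsCoprime (a:ℤ) (d:ℤ) := by
        rw [Nat.isCoprime_iff_coprime]; exact had2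
      have haZ : (a:ℤ) ≠ 0 := Int.natCast_ne_zero.mpr ha0
      obtain ⟨T, hT1, hT2⟩ := t_extract hcopZ haZ he
      -- hT1 : b²+4c² = a²*T , hT2 : b²+c² = d²*T
      have hTpos : 0 < T := by
        by_contra hle
        push_neg at hle
        have h2 : (d:ℤ)^2 * T ≤ 0 := mul_nonpos_of_nonneg_of_nonpos (by positivity) hle
        have h1 : (0:ℤ) < (b:ℤ)^2 + (c:ℤ)^2 := by positivity
        linarith [hT2]
      have hTd3 : T ∣ 3 := by
        apply dvd_three (b := (b:ℤ)) (c := (c:ℤ))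
          (by rw [Nat.isCoprime_iff_coprime]; exact hbc)
        · exact ⟨4*(d:ℤ)^2 - (a:ℤ)^2, by linear_combination 4*hT2 - hT1⟩
        · exact ⟨(a:ℤ)^2 - (d:ℤ)^2, by linear_combination hT1 - hT2⟩
      have hTcases : T = 1 ∨ T = 3 := by
        have h1 : T.natAbs ∣ 3 := by
          simpa using Int.natAbs_dvd_natAbs.mpr hTd3
        have h2 := (Nat.Prime.eq_one_or_self_of_dvd (by norm_num) _ h1)
        rcases Int.natAbs_eq T with h3 | h3 <;> omega
      rcases hTcases with rfl | rfl
      · -- T = 1 : d² = b²+c², a² = b²+4c²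
        have n1 : d^2 = b^2 + c^2 := by
          exact_mod_cast (show ((d:ℤ)^2 = (b:ℤ)^2 + (c:ℤ)^2) by linear_combination -hT2)
        have n2 : a^2 = b^2 + 4*c^2 := by
          exact_mod_cast (show ((a:ℤ)^2 = (b:ℤ)^2 + 4*(c:ℤ)^2) by linear_combination -hT1)
        obtain ⟨s', t', hs'0, ht'0, hst'ne, hst'cop, hsol⟩ :=
          gamma_leg hbo hc0' hbc n1 n2
        have hdlt : d < z := by
          have h1 : d ≤ y₁ := Nat.le_of_dvd hy10 hddvd
          have h2 : y ≤ x * y := Nat.le_mul_of_pos_left y hx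
          omega
        exact IH d hdlt s' t' hs'0 ht'0 hst'ne hst'cop hsol
      · -- T = 3 : b²+c² = 3d² impossible
        have n1 : b^2 + c^2 = 3*d^2 := by
          exact_mod_cast (show ((b:ℤ)^2 + (c:ℤ)^2 = 3*(d:ℤ)^2) by linear_combination hT2)
        exact mod3_kill hbc (d^2) n1
    · -- Case A : both odd
      have hvodd : Odd (x*y) := hxo.mul hyo
      obtain ⟨σ, ρ, hρ0, hρσ, hσρcop, hzσρ, hσv, hDσρ⟩ :=
        sumsq_split_odd hvodd hD0 hzxy hzD
      obtain ⟨w, hw⟩ : ∃ w, x^2 + y^2 = 2*w := by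
        obtain ⟨i, hi⟩ := hxo; obtain ⟨j, hj⟩ := hyo
        exact ⟨2*(i*i+i) + 2*(j*j+j) + 1, by rw [hi, hj]; ring⟩
      have hσ0 : 0 < σ := lt_trans hρ0 hρσ
      have key : σ^4 + ρ^4 = w^2 + σ^2*ρ^2 := by
        have hA : (z:ℤ) = (σ:ℤ)^2 + (ρ:ℤ)^2 := by exact_mod_cast hzσρ
        have hB : (σ:ℤ)^2 = (ρ:ℤ)^2 + (x:ℤ)*(y:ℤ) := by exact_mod_cast hσv
        have hC : (x:ℤ)^2 + (y:ℤ)^2 = 2*(w:ℤ) := by exact_mod_cast hw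
        have k4 : (4:ℤ) * ((σ:ℤ)^4 + (ρ:ℤ)^4) = 4 * ((w:ℤ)^2 + (σ:ℤ)^2*(ρ:ℤ)^2) := by
          linear_combination -heqZ + ((x:ℤ)^2 + (y:ℤ)^2 + 2*(w:ℤ))*hC -
            ((z:ℤ) + (σ:ℤ)^2 + (ρ:ℤ)^2)*hA + 3*((σ:ℤ)^2 - (ρ:ℤ)^2 + (x:ℤ)*(y:ℤ))*hB
        exact_mod_cast mul_left_cancel₀ (by norm_num : (4:ℤ) ≠ 0) k4
      have hwz : w < z := by
        have h1 : z^2 = σ^4 + 2*(σ^2*ρ^2) + ρ^4 := by rw [hzσρ]; ring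
        have h2 : 0 < σ^2*ρ^2 := by positivity
        have h3 : w^2 < z^2 := by omega
        exact lt_of_pow_lt_pow_left₀ 2 (Nat.zero_le _) h3
      exact IH w hwz σ ρ hσ0 hρ0 (by omega) hσρcop key

theorem no_E2 : ∀ z x y : ℕ, 0 < x → 0 < y → x ≠ y → Nat.Coprime x y →
    x ^ 4 + y ^ 4 ≠ z ^ 2 + x ^ 2 * y ^ 2 := by
  intro z
  induction z using Nat.strong_induction_on with
  | _ z IH =>
    intro x y hx hy hne hxy heq
    rcases lt_trichotomy x y with h | h | h
    · have heq' : y ^ 4 + x ^ 4 = z ^ 2 + y ^ 2 * x ^ 2 := by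
        have e : y^2*x^2 = x^2*y^2 := by ring
        omega
      exact L2_main IH hx h hxy.symm heq'
    · exact hne h
    · exact L2_main IH hy h hxy heq

/-- if m² = n² + nl + l² with m square-free and k, l, n pairwise
coprime (k = n + l), then at most one of k, l, n is a perfect square. -/
theorem at_most_one_square (m n l k : ℕ) (hm : 0 < m) (hn : 0 < n) (hl : 0 < l)
    (hk : k = n + l) (heq : m ^ 2 = n ^ 2 + n * l + l ^ 2)
    (hmsf : Squarefree m)
    (hkl : Nat.Coprime k l) (hkn : Nat.Coprime k n) (hnl : Nat.Coprime n l) :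
    ¬(IsSquare k ∧ IsSquare l) ∧ ¬(IsSquare k ∧ IsSquare n) ∧
      ¬(IsSquare l ∧ IsSquare n) := by
  have hkpos : 0 < k := by omega
  refine ⟨?_, ?_, ?_⟩
  · -- k and l squares
    rintro ⟨⟨c, hc⟩, ⟨b, hb⟩⟩
    have hc2 : k = c ^ 2 := by rw [hc]; ring
    have hb2 : l = b ^ 2 := by rw [hb]; ring
    have hc0 : 0 < c := by
      rcases Nat.eq_zero_or_pos c with h0 | h0
      · rw [h0] at hc2; simp at hc2; omega
      · exact h0
    have hb0 : 0 < b := by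
      rcases Nat.eq_zero_or_pos b with h0 | h0
      · rw [h0] at hb2; simp at hb2; omega
      · exact h0
    have hcb : c ≠ b := by
      rintro rfl
      have hkl2 : k = l := by omega
      have hl1 : l = 1 := by
        have h5 := hkl
        rw [hkl2] at h5
        simpa using h5
      omega
    have hcop : Nat.Coprime c b :=
      Nat.Coprime.coprime_dvd_left ⟨c, by omega⟩
        (Nat.Coprime.coprime_dvd_right ⟨b, by omega⟩ hkl)
    have heqZ : (m:ℤ)^2 = (n:ℤ)^2 + (n:ℤ)*(l:ℤ) + (l:ℤ)^2 := by exact_mod_cast heq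
    have hnZ : (n:ℤ) = (c:ℤ)^2 - (b:ℤ)^2 := by
      have h1 : (k:ℤ) = (n:ℤ) + (l:ℤ) := by exact_mod_cast hk
      have h2 : (k:ℤ) = (c:ℤ)^2 := by exact_mod_cast hc2
      have h3 : (l:ℤ) = (b:ℤ)^2 := by exact_mod_cast hb2
      linarith
    have hlZ : (l:ℤ) = (b:ℤ)^2 := by exact_mod_cast hb2
    have key : c^4 + b^4 = m^2 + c^2*b^2 := by
      have keyZ : (c:ℤ)^4 + (b:ℤ)^4 = (m:ℤ)^2 + (c:ℤ)^2*(b:ℤ)^2 := by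
        linear_combination (-1:ℤ)*heqZ - ((n:ℤ)+(c:ℤ)^2-(b:ℤ)^2+(l:ℤ))*hnZ -
          ((c:ℤ)^2-(b:ℤ)^2+(l:ℤ)+(b:ℤ)^2)*hlZ
      exact_mod_cast keyZ
    exact no_E2 m c b hc0 hb0 hcb hcop key
  · -- k and n squares
    rintro ⟨⟨c, hc⟩, ⟨a, ha⟩⟩
    have hc2 : k = c ^ 2 := by rw [hc]; ring
    have ha2 : n = a ^ 2 := by rw [ha]; ring
    have hc0 : 0 < c := by
      rcases Nat.eq_zero_or_pos c with h0 | h0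
      · rw [h0] at hc2; simp at hc2; omega
      · exact h0
    have ha0 : 0 < a := by
      rcases Nat.eq_zero_or_pos a with h0 | h0
      · rw [h0] at ha2; simp at ha2; omega
      · exact h0
    have hca : c ≠ a := by
      rintro rfl
      have hkn2 : k = n := by omega
      have hn1 : n = 1 := by
        have h5 := hkn
        rw [hkn2] at h5
        simpa using h5
      omega
    have hcop : Nat.Coprime c a :=
      Nat.Coprime.coprime_dvd_left ⟨c, by omega⟩
        (Nat.Coprime.coprime_dvd_right ⟨a, by omega⟩ hkn)
    have heqZ : (m:ℤ)^2 = (n:ℤ)^2 + (n:ℤ)*(l:ℤ) + (l:ℤ)^2 := by exact_mod_cast heq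
    have hlZ : (l:ℤ) = (c:ℤ)^2 - (a:ℤ)^2 := by
      have h1 : (k:ℤ) = (n:ℤ) + (l:ℤ) := by exact_mod_cast hk
      have h2 : (k:ℤ) = (c:ℤ)^2 := by exact_mod_cast hc2
      have h3 : (n:ℤ) = (a:ℤ)^2 := by exact_mod_cast ha2
      linarith
    have hnZ : (n:ℤ) = (a:ℤ)^2 := by exact_mod_cast ha2
    have key : c^4 + a^4 = m^2 + c^2*a^2 := by
      have keyZ : (c:ℤ)^4 + (a:ℤ)^4 = (m:ℤ)^2 + (c:ℤ)^2*(a:ℤ)^2 := by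
        linear_combination (-1:ℤ)*heqZ - ((l:ℤ)+(c:ℤ)^2-(a:ℤ)^2+(n:ℤ))*hlZ -
          ((c:ℤ)^2-(a:ℤ)^2+(n:ℤ)+(a:ℤ)^2)*hnZ
      exact_mod_cast keyZ
    exact no_E2 m c a hc0 ha0 hca hcop key
  · -- l and n squares
    rintro ⟨⟨b, hb⟩, ⟨a, ha⟩⟩
    have hb2 : l = b ^ 2 := by rw [hb]; ring
    have ha2 : n = a ^ 2 := by rw [ha]; ring
    have hb0 : 0 < b := by
      rcases Nat.eq_zero_or_pos b with h0 | h0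
      · rw [h0] at hb2; simp at hb2; omega
      · exact h0
    have ha0 : 0 < a := by
      rcases Nat.eq_zero_or_pos a with h0 | h0
      · rw [h0] at ha2; simp at ha2; omega
      · exact h0
    have hcop : Nat.Coprime a b :=
      Nat.Coprime.coprime_dvd_left ⟨a, by omega⟩
        (Nat.Coprime.coprime_dvd_right ⟨b, by omega⟩ hnl)
    have key : a^4 + a^2*b^2 + b^4 = m^2 := by
      have e1 : (a^2)^2 = a^4 := by ring
      have e2 : (b^2)^2 = b^4 := by ring
      have e3 : n^2 = (a^2)^2 := by rw [ha2]
      have e4 : l^2 = (b^2)^2 := by rw [hb2]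
      have e5 : n*l = a^2*b^2 := by rw [ha2, hb2]
      omega
    exact no_E1 m a b ha0 hb0 hcop key
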